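/- Let χ : ℝ → ℝ be an even function with χ(0) = 1 satisfying |1 − χ(z)| ≤ C₅·z² for all z ∈ ℝ (as holds for χ(z) = (cos z + 1)·ψ_E(z/2)/(2·sinc z) under filter condition (v)). Let b₀ ∈ ℝ^d satisfy ‖Ω²·C_B·b₀‖² ≤ H₀, and let Δe : ℝ → ℝ^d be the exact solution of Δe''(t) = −Ω²·Δe(t) + G·Δe(t) with initial values Δe(t₀) = 0 and Δe'(t₀) = (I − χ(τΩ))·C_B·b₀. Then for all t with t₀ ≤ t ≤ T one has ‖Δe(t)‖ ≤ (T − t₀)·C₅·√H₀·τ². -/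

import Mathlib

noncomputable def sinc (z : ℝ) : ℝ := if z = 0 then 1 else Real.sin z / z

noncomputable def mulE {d : ℕ} (A : Matrix (Fin d) (Fin d) ℝ)
    (v : EuclideanSpace ℝ (Fin d)) : EuclideanSpace ℝ (Fin d) :=
  (WithLp.equiv 2 (Fin d → ℝ)).symm (A.mulVec ((WithLp.equiv 2 (Fin d → ℝ)) v))

noncomputable def fDiag {d : ℕ} (f : ℝ → ℝ) (s : ℝ) (ωv : Fin d → ℝ) :
    Matrix (Fin d) (Fin d) ℝ :=
  Matrix.diagonal fun i => f (s * ωv i)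

lemma mulE_eq_toEuclideanLin {d : ℕ} (A : Matrix (Fin d) (Fin d) ℝ)
    (v : EuclideanSpace ℝ (Fin d)) : mulE A v = Matrix.toEuclideanLin A v := by
  rw [Matrix.toEuclideanLin_apply]; rfl

lemma mulE_apply {d : ℕ} (A : Matrix (Fin d) (Fin d) ℝ)
    (v : EuclideanSpace ℝ (Fin d)) (i : Fin d) :
    mulE A v i = A.mulVec (fun j => v j) i := rfl

lemma mulE_add {d : ℕ} (M N : Matrix (Fin d) (Fin d) ℝ) (v : EuclideanSpace ℝ (Fin d)) :
    mulE (M + N) v = mulE M v + mulE N v := by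
  apply PiLp.ext; intro i
  simp [mulE_apply, Matrix.add_mulVec]

lemma mulE_neg {d : ℕ} (M : Matrix (Fin d) (Fin d) ℝ) (v : EuclideanSpace ℝ (Fin d)) :
    mulE (-M) v = -mulE M v := by
  apply PiLp.ext; intro i
  simp [mulE_apply, Matrix.neg_mulVec]

theorem stmt2
    (d : ℕ) (hd : 1 ≤ d)
    (CE CB : Matrix (Fin d) (Fin d) ℝ) (hCB : CB = CE.transpose)
    (ow : ℝ) (how : 0 < ow)
    (ωv : Fin d → ℝ) (hωv : ∀ i, ωv i = 0 ∨ ωv i = ow)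
    (t0 T τ H0 C5 : ℝ) (hτ : 0 < τ) (hH0 : 0 < H0) (hC5 : 0 < C5)
    (χ : ℝ → ℝ) (hχeven : ∀ z, χ (-z) = χ z) (hχ0 : χ 0 = 1)
    (hχ : ∀ z : ℝ, |1 - χ z| ≤ C5 * z^2)
    (b0 : EuclideanSpace ℝ (Fin d))
    (hb0 : ‖mulE ((Matrix.diagonal ωv)^2) (mulE CB b0)‖^2 ≤ H0)
    (Δe Δed : ℝ → EuclideanSpace ℝ (Fin d))
    (hΔe : ∀ t, HasDerivAt Δe (Δed t) t)
    (hΔed : ∀ t, HasDerivAt Δed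
      (-mulE ((Matrix.diagonal ωv)^2) (Δe t) + mulE (-(CB * CE)) (Δe t)) t)
    (hinit : Δe t0 = 0)
    (hinitd : Δed t0 = mulE (1 - fDiag χ τ ωv) (mulE CB b0)) :
    ∀ t : ℝ, t0 ≤ t → t ≤ T →
      ‖Δe t‖ ≤ (T - t0) * C5 * Real.sqrt H0 * τ^2 := by
  set D2 : Matrix (Fin d) (Fin d) ℝ := (Matrix.diagonal ωv)^2 with hD2
  set A : Matrix (Fin d) (Fin d) ℝ := D2 + CB * CE with hA
  -- A is symmetric
  have hAH : A.IsHermitian := by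
    show A.conjTranspose = A
    have : A.conjTranspose = A.transpose := rfl
    rw [this, hA, Matrix.transpose_add, Matrix.transpose_mul, hCB, hD2,
      Matrix.diagonal_pow, Matrix.diagonal_transpose, Matrix.transpose_transpose]
  set L : EuclideanSpace ℝ (Fin d) →L[ℝ] EuclideanSpace ℝ (Fin d) :=
    LinearMap.toContinuousLinearMap (Matrix.toEuclideanLin A) with hLdef
  have hLA : ∀ v, mulE A v = L v := fun v => mulE_eq_toEuclideanLin A v
  have hsym : ∀ x y : EuclideanSpace ℝ (Fin d),
      (inner ℝ (L x) y : ℝ) = inner ℝ x (L y) := by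
    intro x y
    exact Matrix.isHermitian_iff_isSymmetric.mp hAH x y
  -- the ODE in terms of L
  have hODE : ∀ t, HasDerivAt Δed (-(L (Δe t))) t := by
    intro t
    have h := hΔed t
    have : -mulE D2 (Δe t) + mulE (-(CB * CE)) (Δe t) = -(L (Δe t)) := by
      rw [mulE_neg, ← hLA, hA, mulE_add, neg_add]
    rwa [this] at h
  -- energy
  set q : ℝ → ℝ := fun t => (inner ℝ (Δed t) (Δed t) : ℝ) + (inner ℝ (Δe t) (L (Δe t)) : ℝ)
    with hqdef
  have hq' : ∀ s, HasDerivAt q 0 s := by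
    intro s
    have h1 := HasDerivAt.inner ℝ (hODE s) (hODE s)
    have h2 : HasDerivAt (fun t => L (Δe t)) (L (Δed s)) s :=
      HasFDerivAt.comp_hasDerivAt s (L.hasFDerivAt) (hΔe s)
    have h3 := HasDerivAt.inner ℝ (hΔe s) h2
    have h4 := h1.add h3
    have : (inner ℝ (Δed s) (-(L (Δe s))) : ℝ) + inner ℝ (-(L (Δe s))) (Δed s)
        + ((inner ℝ (Δe s) (L (Δed s)) : ℝ) + inner ℝ (Δed s) (L (Δe s))) = 0 := by
      have e1 : (inner ℝ (Δe s) (L (Δed s)) : ℝ) = inner ℝ (L (Δe s)) (Δed s) :=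
        (hsym (Δe s) (Δed s)).symm
      rw [inner_neg_right, inner_neg_left, e1, real_inner_comm (L (Δe s)) (Δed s)]
      ring
    rw [this] at h4
    exact h4
  have hqc : ∀ s : ℝ, q s = q t0 := by
    intro s
    exact is_const_of_deriv_eq_zero (fun x => (hq' x).differentiableAt)
      (fun x => (hq' x).deriv) s t0
  -- positivity of the quadratic form
  have hpsd : ∀ v : EuclideanSpace ℝ (Fin d), (0:ℝ) ≤ inner ℝ v (L v) := by
    intro v
    have hsplit : (inner ℝ v (L v) : ℝ) = inner ℝ v (mulE D2 v) + inner ℝ v (mulE (CB * CE) v) := by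
      rw [← hLA, hA, mulE_add, inner_add_right]
    rw [hsplit]
    have h1 : (0:ℝ) ≤ inner ℝ v (mulE D2 v) := by
      rw [PiLp.inner_apply]
      apply Finset.sum_nonneg
      intro i _
      have : mulE D2 v i = ωv i ^ 2 * v i := by
        rw [mulE_apply, hD2, Matrix.diagonal_pow, Matrix.mulVec_diagonal]
        rfl
      rw [this]
      simp only [RCLike.inner_apply, starRingEnd_apply, star_trivial]
      nlinarith [sq_nonneg (ωv i * v i)]
    have h2 : (0:ℝ) ≤ inner ℝ v (mulE (CB * CE) v) := by
      have hps := Matrix.posSemidef_conjTranspose_mul_self CE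
      have := hps.dotProduct_mulVec_nonneg (fun j => v j)
      have heq : (inner ℝ v (mulE (CB * CE) v) : ℝ)
          = dotProduct (star fun j => v j) ((CE.conjTranspose * CE).mulVec fun j => v j) := by
        rw [PiLp.inner_apply]
        have hc : CE.conjTranspose = CB := by rw [hCB]; rfl
        rw [hc]
        simp [mulE_apply, dotProduct, RCLike.inner_apply, starRingEnd_apply, mul_comm]
      rw [heq]
      exact this
    linarith
  -- bound on ‖Δed s‖
  set w : EuclideanSpace ℝ (Fin d) := mulE CB b0 with hw
  have hnormderiv0 : ‖Δed t0‖ ≤ C5 * τ^2 * Real.sqrt H0 := by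
    have hb : ‖mulE D2 w‖ ≤ Real.sqrt H0 := by
      rw [Real.le_sqrt (norm_nonneg _) hH0.le]
      exact hb0
    have hstep : ‖Δed t0‖ ≤ C5 * τ^2 * ‖mulE D2 w‖ := by
      rw [hinitd]
      rw [EuclideanSpace.norm_eq, EuclideanSpace.norm_eq]
      have key : ∑ i, ‖mulE (1 - fDiag χ τ ωv) w i‖ ^ 2
          ≤ (C5 * τ^2)^2 * ∑ i, ‖mulE D2 w i‖ ^ 2 := by
        rw [Finset.mul_sum]
        apply Finset.sum_le_sum
        intro i _
        have e1 : mulE (1 - fDiag χ τ ωv) w i = (1 - χ (τ * ωv i)) * w i := by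
          rw [mulE_apply]
          have : (1 - fDiag χ τ ωv) = Matrix.diagonal (fun j => 1 - χ (τ * ωv j)) := by
            rw [fDiag, ← Matrix.diagonal_one, Matrix.diagonal_sub]
          rw [this, Matrix.mulVec_diagonal]
        have e2 : mulE D2 w i = ωv i ^ 2 * w i := by
          rw [mulE_apply, hD2, Matrix.diagonal_pow, Matrix.mulVec_diagonal]
          simp [Pi.pow_apply]
        rw [e1, e2, Real.norm_eq_abs, Real.norm_eq_abs]
        have hb1 := hχ (τ * ωv i)
        have hb2 : |1 - χ (τ * ωv i)| ≤ C5 * τ^2 * ωv i ^ 2 := by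
          calc |1 - χ (τ * ωv i)| ≤ C5 * (τ * ωv i)^2 := hb1
            _ = C5 * τ^2 * ωv i ^ 2 := by ring
        have habs : (0:ℝ) ≤ |1 - χ (τ * ωv i)| := abs_nonneg _
        have hsq : (1 - χ (τ * ωv i))^2 ≤ (C5 * τ^2 * ωv i ^ 2)^2 := by
          rw [← sq_abs]
          exact pow_le_pow_left₀ habs hb2 2
        calc |(1 - χ (τ * ωv i)) * w i| ^ 2 = (1 - χ (τ * ωv i))^2 * w i ^ 2 := by
              rw [abs_mul, mul_pow, sq_abs, sq_abs]
          _ ≤ (C5 * τ^2 * ωv i ^ 2)^2 * w i ^ 2 :=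
              mul_le_mul_of_nonneg_right hsq (sq_nonneg _)
          _ = (C5 * τ^2)^2 * |ωv i ^ 2 * w i| ^ 2 := by
              simp [abs_mul, mul_pow, sq_abs]; ring
      calc Real.sqrt (∑ i, ‖mulE (1 - fDiag χ τ ωv) w i‖ ^ 2)
          ≤ Real.sqrt ((C5 * τ^2)^2 * ∑ i, ‖mulE D2 w i‖ ^ 2) := Real.sqrt_le_sqrt key
        _ = C5 * τ^2 * Real.sqrt (∑ i, ‖mulE D2 w i‖ ^ 2) := by
            rw [Real.sqrt_mul (sq_nonneg _), Real.sqrt_sq (by positivity)]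
    calc ‖Δed t0‖ ≤ C5 * τ^2 * ‖mulE D2 w‖ := hstep
      _ ≤ C5 * τ^2 * Real.sqrt H0 := by
          apply mul_le_mul_of_nonneg_left hb (by positivity)
  have hderivbound : ∀ s : ℝ, ‖Δed s‖ ≤ C5 * τ^2 * Real.sqrt H0 := by
    intro s
    have h1 : ‖Δed s‖^2 ≤ ‖Δed t0‖^2 := by
      have hq0 : q t0 = ‖Δed t0‖^2 := by
        have h5 : q t0 = (inner ℝ (Δed t0) (Δed t0) : ℝ) + inner ℝ (Δe t0) (L (Δe t0)) := rfl
        rw [h5, hinit, real_inner_self_eq_norm_sq]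
        simp
      have hqs : ‖Δed s‖^2 ≤ q s := by
        rw [hqdef]
        simp only
        rw [real_inner_self_eq_norm_sq]
        have := hpsd (Δe s)
        linarith
      calc ‖Δed s‖^2 ≤ q s := hqs
        _ = q t0 := hqc s
        _ = ‖Δed t0‖^2 := hq0
    have := Real.sqrt_le_sqrt h1
    rw [Real.sqrt_sq (norm_nonneg _), Real.sqrt_sq (norm_nonneg _)] at this
    exact this.trans hnormderiv0
  -- conclude
  intro t ht htT
  have hseg := norm_image_sub_le_of_norm_deriv_le_segment'
    (f := Δe) (f' := Δed) (a := t0) (b := t) (C := C5 * τ^2 * Real.sqrt H0)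
    (fun x _ => (hΔe x).hasDerivWithinAt)
    (fun x _ => hderivbound x) t (Set.right_mem_Icc.mpr ht)
  rw [hinit, sub_zero] at hseg
  have hB : (0:ℝ) ≤ C5 * τ^2 * Real.sqrt H0 := by positivity
  calc ‖Δe t‖ ≤ C5 * τ^2 * Real.sqrt H0 * (t - t0) := hseg
    _ ≤ C5 * τ^2 * Real.sqrt H0 * (T - t0) := by
        apply mul_le_mul_of_nonneg_left (by linarith) hB
    _ = (T - t0) * C5 * Real.sqrt H0 * τ^2 := by ring
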